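/- If g is a scalar modular form of weight w ≥ 1 for Γ, then its Cohen–Kuznetsov lifting g̃(z,X) = Σ_{j=0}^{∞} g^{(j)}(z) X^j / (j! (j+w−1)!) is a Jacobi-like form of weight w: for all γ ∈ Γ, g̃(γz, 𝔍(γ,z)^{−2}X) = 𝔍(γ,z)^{w} e^{𝔎(γ,z)X} g̃(z,X). -/

import Mathlib

open Matrix Complex Finset

abbrev SL2R := Matrix.SpecialLinearGroup (Fin 2) ℝ

noncomputable def Jf (γ : SL2R) (z : ℂ) : ℂ := (γ.1 1 0 : ℝ) * z + (γ.1 1 1 : ℝ)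

noncomputable def Kf (γ : SL2R) (z : ℂ) : ℂ := (γ.1 1 0 : ℝ) / Jf γ z

noncomputable def actSL (γ : SL2R) (z : ℂ) : ℂ :=
  ((γ.1 0 0 : ℝ) * z + (γ.1 0 1 : ℝ)) / Jf γ z

/-- Scalar modular form of weight k for Γ. -/
def IsMF (Γ : Subgroup SL2R) (k : ℤ) (f : ℂ → ℂ) : Prop :=
  DifferentiableOn ℂ f {z : ℂ | 0 < z.im} ∧
    ∀ γ ∈ Γ, ∀ z : ℂ, 0 < z.im → f (actSL γ z) = Jf γ z ^ k * f z

lemma detC (γ : SL2R) : ((γ.1 0 0 : ℝ) : ℂ) * ((γ.1 1 1 : ℝ) : ℂ) - ((γ.1 0 1 : ℝ) : ℂ) * ((γ.1 1 0 : ℝ) : ℂ) = 1 := by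
  have h := γ.2
  rw [Matrix.det_fin_two] at h
  have : ((γ.1 0 0 * γ.1 1 1 - γ.1 0 1 * γ.1 1 0 : ℝ) : ℂ) = 1 := by rw [h]; norm_num
  push_cast at this
  linear_combination this

lemma Jf_ne (γ : SL2R) (z : ℂ) (hz : 0 < z.im) : Jf γ z ≠ 0 := by
  intro h
  by_cases hc : (γ.1 1 0 : ℝ) = 0
  · have hd : ((γ.1 1 1 : ℝ) : ℂ) = 0 := by simpa [Jf, hc] using h
    have := detC γ
    rw [hd] at this
    simp [hc] at this
  · have him : (Jf γ z).im = (γ.1 1 0 : ℝ) * z.im := by simp [Jf]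
    rw [h] at him
    simp at him
    rcases him with h1 | h2
    · exact hc h1
    · exact absurd h2 (ne_of_gt hz)

lemma im_actSL (γ : SL2R) (z : ℂ) (hz : 0 < z.im) : 0 < (actSL γ z).im := by
  have hJ := Jf_ne γ z hz
  have hns : 0 < Complex.normSq (Jf γ z) := Complex.normSq_pos.mpr hJ
  have key : (actSL γ z).im = z.im / Complex.normSq (Jf γ z) := by
    rw [actSL, Complex.div_im]
    have hdet := γ.2
    rw [Matrix.det_fin_two] at hdet
    simp only [Jf, Complex.add_im, Complex.add_re, Complex.mul_im, Complex.mul_re,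
      Complex.ofReal_re, Complex.ofReal_im]
    have hns' : Complex.normSq ((γ.1 1 0 : ℝ) * z + ((γ.1 1 1 : ℝ) : ℂ)) ≠ 0 := by
      simpa [Jf] using ne_of_gt hns
    field_simp
    linear_combination z.im * hdet
  rw [key]
  positivity

lemma hasDerivAt_Jf (γ : SL2R) (z : ℂ) : HasDerivAt (Jf γ) ((γ.1 1 0 : ℝ) : ℂ) z := by
  show HasDerivAt (fun z : ℂ => ((γ.1 1 0 : ℝ) : ℂ) * z + ((γ.1 1 1 : ℝ) : ℂ)) _ z
  simpa using ((hasDerivAt_id z).const_mul (((γ.1 1 0 : ℝ)) : ℂ)).add_const (((γ.1 1 1 : ℝ)) : ℂ)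

lemma hasDerivAt_Kf (γ : SL2R) (z : ℂ) (hJ : Jf γ z ≠ 0) :
    HasDerivAt (Kf γ) (-(Kf γ z) ^ 2) z := by
  have h := (hasDerivAt_const z (((γ.1 1 0 : ℝ)) : ℂ)).div (hasDerivAt_Jf γ z) hJ
  refine h.congr_deriv ?_
  unfold Kf
  field_simp
  ring

lemma hasDerivAt_actSL (γ : SL2R) (z : ℂ) (hJ : Jf γ z ≠ 0) :
    HasDerivAt (actSL γ) ((Jf γ z ^ 2)⁻¹) z := by
  have hnum : HasDerivAt (fun z : ℂ => ((γ.1 0 0 : ℝ) : ℂ) * z + ((γ.1 0 1 : ℝ) : ℂ))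
      ((γ.1 0 0 : ℝ) : ℂ) z := by
    simpa using ((hasDerivAt_id z).const_mul (((γ.1 0 0 : ℝ)) : ℂ)).add_const (((γ.1 0 1 : ℝ)) : ℂ)
  have h := hnum.div (hasDerivAt_Jf γ z) hJ
  have hnum2 : ((γ.1 0 0 : ℝ) : ℂ) * Jf γ z - (((γ.1 0 0 : ℝ) : ℂ) * z + ((γ.1 0 1 : ℝ) : ℂ)) * ((γ.1 1 0 : ℝ) : ℂ) = 1 := by
    rw [Jf]; linear_combination detC γ
  refine h.congr_deriv ?_
  rw [hnum2, inv_eq_one_div]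

def ckN (v m j : ℕ) : ℕ := m.choose j * (j + v + 1).ascFactorial (m - j)

lemma ckN_mul (v m j : ℕ) (hj : j ≤ m) :
    ckN v m j * ((m - j).factorial * j.factorial * (j + v).factorial) =
      m.factorial * (m + v).factorial := by
  have h1 := Nat.choose_mul_factorial_mul_factorial hj
  have h2 := Nat.factorial_mul_ascFactorial (j + v) (m - j)
  have h3 : j + v + (m - j) = m + v := by omega
  rw [h3] at h2
  calc ckN v m j * ((m - j).factorial * j.factorial * (j + v).factorial)
      = (m.choose j * j.factorial * (m - j).factorial) *
          ((j + v).factorial * (j + v + 1).ascFactorial (m - j)) := by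
        rw [ckN]; ring
    _ = m.factorial * (m + v).factorial := by rw [h1, h2]

lemma ckN_castC (v m j : ℕ) (hj : j ≤ m) :
    (ckN v m j : ℂ) = (m.factorial * (m + v).factorial : ℂ) /
      (((m - j).factorial : ℂ) * (j.factorial : ℂ) * ((j + v).factorial : ℂ)) := by
  rw [eq_div_iff (by
    refine mul_ne_zero (mul_ne_zero ?_ ?_) ?_ <;>
      exact Nat.cast_ne_zero.2 (Nat.factorial_ne_zero _))]
  exact_mod_cast congrArg (Nat.cast (R := ℂ)) (ckN_mul v m j hj)

lemma ckN_self (v m : ℕ) : ckN v m m = 1 := by simp [ckN]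

lemma ckN_gt (v m : ℕ) : ckN v m (m + 1) = 0 := by simp [ckN, Nat.choose_succ_self]

lemma ckN_zero_succ (v m : ℕ) : ckN v (m + 1) 0 = (m + v + 1) * ckN v m 0 := by
  simp only [ckN, Nat.choose_zero_right, Nat.sub_zero, one_mul, Nat.zero_add,
    Nat.ascFactorial_succ]
  ring_nf

lemma ckN_rec (v : ℕ) {m j : ℕ} (hj : j ≤ m) :
    (ckN v (m + 1) (j + 1) : ℂ) = (m + v + j + 2 : ℂ) * ckN v m (j + 1) + ckN v m j := by
  rcases eq_or_lt_of_le hj with rfl | hlt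
  · rw [ckN_self, ckN_self, ckN_gt]
    norm_num
  · obtain ⟨t, rfl⟩ : ∃ t, m = j + 1 + t := ⟨m - (j + 1), by omega⟩
    set m := j + 1 + t with hm
    have dne : (((t + 1).factorial : ℂ) * ((j + 1).factorial : ℂ) * ((j + v + 1).factorial : ℂ)) ≠ 0 := by
      refine mul_ne_zero (mul_ne_zero ?_ ?_) ?_ <;>
        exact Nat.cast_ne_zero.2 (Nat.factorial_ne_zero _)
    apply mul_right_cancel₀ dne
    have e1 : ckN v (m + 1) (j + 1) * ((t + 1).factorial * (j + 1).factorial * (j + v + 1).factorial)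
        = (m + 1).factorial * (m + v + 1).factorial := by
      have h := ckN_mul v (m + 1) (j + 1) (by omega)
      rwa [show m + 1 - (j + 1) = t + 1 from by omega,
        show j + 1 + v = j + v + 1 from by omega,
        show m + 1 + v = m + v + 1 from by omega] at h
    have e2 : ckN v m (j + 1) * (t.factorial * (j + 1).factorial * (j + v + 1).factorial)
        = m.factorial * (m + v).factorial := by
      have h := ckN_mul v m (j + 1) (by omega)
      rwa [show m - (j + 1) = t from by omega,
        show j + 1 + v = j + v + 1 from by omega] at h
    have e3 : ckN v m j * ((t + 1).factorial * j.factorial * (j + v).factorial)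
        = m.factorial * (m + v).factorial := by
      have h := ckN_mul v m j (by omega)
      rwa [show m - j = t + 1 from by omega] at h
    have c1 : (ckN v (m + 1) (j + 1) : ℂ) * (((t + 1).factorial : ℂ) * ((j + 1).factorial : ℂ) * ((j + v + 1).factorial : ℂ))
        = ((m + 1).factorial : ℂ) * ((m + v + 1).factorial : ℂ) := by exact_mod_cast congrArg (Nat.cast (R := ℂ)) e1
    have c2 : (ckN v m (j + 1) : ℂ) * ((t.factorial : ℂ) * ((j + 1).factorial : ℂ) * ((j + v + 1).factorial : ℂ))
        = (m.factorial : ℂ) * ((m + v).factorial : ℂ) := by exact_mod_cast congrArg (Nat.cast (R := ℂ)) e2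
    have c3 : (ckN v m j : ℂ) * (((t + 1).factorial : ℂ) * (j.factorial : ℂ) * ((j + v).factorial : ℂ))
        = (m.factorial : ℂ) * ((m + v).factorial : ℂ) := by exact_mod_cast congrArg (Nat.cast (R := ℂ)) e3
    have f1 : ((t + 1).factorial : ℂ) = (t + 1) * (t.factorial : ℂ) := by
      exact_mod_cast congrArg (Nat.cast (R := ℂ)) (Nat.factorial_succ t)
    have f2 : ((m + 1).factorial : ℂ) = (m + 1) * (m.factorial : ℂ) := by
      exact_mod_cast congrArg (Nat.cast (R := ℂ)) (Nat.factorial_succ m)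
    have f3 : ((m + v + 1).factorial : ℂ) = (m + v + 1) * ((m + v).factorial : ℂ) := by
      exact_mod_cast congrArg (Nat.cast (R := ℂ)) (Nat.factorial_succ (m + v))
    have f4 : ((j + 1).factorial : ℂ) = (j + 1) * (j.factorial : ℂ) := by
      exact_mod_cast congrArg (Nat.cast (R := ℂ)) (Nat.factorial_succ j)
    have f5 : ((j + v + 1).factorial : ℂ) = (j + v + 1) * ((j + v).factorial : ℂ) := by
      exact_mod_cast congrArg (Nat.cast (R := ℂ)) (Nat.factorial_succ (j + v))
    have exp2 : (ckN v m (j + 1) : ℂ) * (((t + 1).factorial : ℂ) * ((j + 1).factorial : ℂ) * ((j + v + 1).factorial : ℂ))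
        = ((t : ℂ) + 1) * ((m.factorial : ℂ) * ((m + v).factorial : ℂ)) := by
      rw [f1, ← c2]; ring
    have exp3 : (ckN v m j : ℂ) * (((t + 1).factorial : ℂ) * ((j + 1).factorial : ℂ) * ((j + v + 1).factorial : ℂ))
        = ((j : ℂ) + 1) * ((j : ℂ) + (v : ℂ) + 1) * ((m.factorial : ℂ) * ((m + v).factorial : ℂ)) := by
      rw [f4, f5, ← c3]; ring
    rw [add_mul, mul_assoc ((m : ℂ) + v + j + 2), exp2, exp3, c1, f2, f3, hm]
    push_cast
    ring

lemma key_sum (v m : ℕ) (K : ℂ) (u : ℕ → ℂ) :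
    (2 * m + v + 1 : ℂ) * K * (∑ j ∈ range (m + 1), (ckN v m j : ℂ) * K ^ (m - j) * u j)
      + ∑ j ∈ range (m + 1), ((ckN v m j : ℂ) * (((m - j : ℕ) : ℂ) * K ^ (m - j - 1) * (-(K ^ 2))) * u j
          + (ckN v m j : ℂ) * K ^ (m - j) * u (j + 1))
    = ∑ j ∈ range (m + 2), (ckN v (m + 1) j : ℂ) * K ^ (m + 1 - j) * u j := by
  rw [Finset.mul_sum, ← Finset.sum_add_distrib]
  have step1 : ∀ j ∈ range (m + 1),
      (2 * m + v + 1 : ℂ) * K * ((ckN v m j : ℂ) * K ^ (m - j) * u j)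
        + ((ckN v m j : ℂ) * (((m - j : ℕ) : ℂ) * K ^ (m - j - 1) * (-(K ^ 2))) * u j
          + (ckN v m j : ℂ) * K ^ (m - j) * u (j + 1))
      = (((m : ℂ) + v + j + 1) * (ckN v m j : ℂ) * K ^ (m + 1 - j) * u j
          + (ckN v m j : ℂ) * K ^ (m - j) * u (j + 1)) := by
    intro j hj
    have hjm : j ≤ m := by simpa using Nat.lt_succ_iff.mp (Finset.mem_range.mp hj)
    obtain ⟨s, hs⟩ : ∃ s, m = j + s := ⟨m - j, by omega⟩
    subst hs
    rw [show j + s - j = s from by omega, show j + s + 1 - j = s + 1 from by omega]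
    rcases s with _ | s'
    · simp
      push_cast
      ring
    · rw [show s' + 1 - 1 = s' from by omega]
      push_cast
      ring
  rw [Finset.sum_congr rfl step1, Finset.sum_add_distrib]
  rw [Finset.sum_range_succ' (fun j => ((m : ℂ) + v + j + 1) * (ckN v m j : ℂ) * K ^ (m + 1 - j) * u j) m]
  rw [Finset.sum_range_succ' (fun j => (ckN v (m + 1) j : ℂ) * K ^ (m + 1 - j) * u j) (m + 1)]
  have hzero : (((m : ℂ) + v + (m + 1) + 1) * (ckN v m (m + 1) : ℂ) * K ^ (m + 1 - (m + 1)) * u (m + 1)) = 0 := by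
    rw [ckN_gt]; simp
  have hext : (∑ j ∈ range m, ((m : ℂ) + v + (j + 1) + 1) * (ckN v m (j + 1) : ℂ) * K ^ (m - j) * u (j + 1))
      = ∑ j ∈ range (m + 1), ((m : ℂ) + v + (j + 1) + 1) * (ckN v m (j + 1) : ℂ) * K ^ (m - j) * u (j + 1) := by
    rw [Finset.sum_range_succ, ckN_gt]
    push_cast
    ring
  push_cast
  rw [hext]
  have hcomb : (∑ j ∈ range (m + 1), ((m : ℂ) + v + (j + 1) + 1) * (ckN v m (j + 1) : ℂ) * K ^ (m - j) * u (j + 1))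
      + (∑ j ∈ range (m + 1), (ckN v m j : ℂ) * K ^ (m - j) * u (j + 1))
      = ∑ j ∈ range (m + 1), (ckN v (m + 1) (j + 1) : ℂ) * K ^ (m - j) * u (j + 1) := by
    rw [← Finset.sum_add_distrib]
    refine Finset.sum_congr rfl fun j hj => ?_
    have hjm : j ≤ m := Nat.lt_succ_iff.mp (Finset.mem_range.mp hj)
    rw [ckN_rec v hjm]
    push_cast
    ring
  rw [add_right_comm, hcomb]
  congr 1
  rw [ckN_zero_succ]
  push_cast
  ring

lemma CK_aux (v : ℕ) (g : ℂ → ℂ) (γ : SL2R)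
    (hol : ∀ n : ℕ, AnalyticOnNhd ℂ (iteratedDeriv n g) {z : ℂ | 0 < z.im})
    (hmod : ∀ z : ℂ, 0 < z.im → g (actSL γ z) = Jf γ z ^ (v + 1) * g z) :
    ∀ m : ℕ, ∀ z : ℂ, 0 < z.im →
      iteratedDeriv m g (actSL γ z) =
        Jf γ z ^ (2 * m + v + 1) *
          ∑ j ∈ range (m + 1), (ckN v m j : ℂ) * Kf γ z ^ (m - j) * iteratedDeriv j g z := by
  have hU : IsOpen {z : ℂ | 0 < z.im} := isOpen_lt continuous_const Complex.continuous_im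
  have hder : ∀ (n : ℕ) (w : ℂ), 0 < w.im →
      HasDerivAt (iteratedDeriv n g) (iteratedDeriv (n + 1) g w) w := by
    intro n w hw
    have hd := ((hol n) w hw).differentiableAt.hasDerivAt
    rwa [← iteratedDeriv_succ] at hd
  intro m
  induction m with
  | zero =>
    intro z hz
    simpa [ckN] using hmod z hz
  | succ m ih =>
    intro z hz
    have hJ := Jf_ne γ z hz
    have hL : HasDerivAt (fun w => iteratedDeriv m g (actSL γ w))
        (iteratedDeriv (m + 1) g (actSL γ z) * (Jf γ z ^ 2)⁻¹) z := by
      have := (hder m (actSL γ z) (im_actSL γ z hz)).comp z (hasDerivAt_actSL γ z hJ)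
      exact this
    have hsum : HasDerivAt (fun w => ∑ j ∈ range (m + 1),
          (ckN v m j : ℂ) * Kf γ w ^ (m - j) * iteratedDeriv j g w)
        (∑ j ∈ range (m + 1),
          ((ckN v m j : ℂ) * (((m - j : ℕ) : ℂ) * Kf γ z ^ (m - j - 1) * (-(Kf γ z) ^ 2)) * iteratedDeriv j g z
            + (ckN v m j : ℂ) * Kf γ z ^ (m - j) * iteratedDeriv (j + 1) g z)) z := by
      apply HasDerivAt.fun_sum
      intro j hj
      have hKp := (hasDerivAt_Kf γ z hJ).pow (m - j)
      have h1 := (hKp.const_mul ((ckN v m j : ℂ))).mul (hder j z hz)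
      convert h1 using 1 <;> try rfl
      try ring
    have hJp : HasDerivAt (fun w => Jf γ w ^ (2 * m + v + 1))
        ((2 * m + v + 1 : ℂ) * Jf γ z ^ (2 * m + v) * ((γ.1 1 0 : ℝ) : ℂ)) z := by
      have := (hasDerivAt_Jf γ z).pow (2 * m + v + 1)
      norm_num at this
      convert this using 2
      all_goals (try rfl); all_goals (push_cast; ring)
    have hR := hJp.mul hsum
    have hEv : (fun w => iteratedDeriv m g (actSL γ w)) =ᶠ[nhds z]
        (fun w => Jf γ w ^ (2 * m + v + 1) * ∑ j ∈ range (m + 1),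
          (ckN v m j : ℂ) * Kf γ w ^ (m - j) * iteratedDeriv j g w) := by
      filter_upwards [hU.mem_nhds hz] with w hw using ih w hw
    have huniq := (hR.congr_of_eventuallyEq hEv).unique hL
    have hc : ((γ.1 1 0 : ℝ) : ℂ) = Kf γ z * Jf γ z := by
      rw [Kf]; field_simp
    have hmain : iteratedDeriv (m + 1) g (actSL γ z) =
        ((2 * m + v + 1 : ℂ) * Jf γ z ^ (2 * m + v) * ((γ.1 1 0 : ℝ) : ℂ) *
            (∑ j ∈ range (m + 1), (ckN v m j : ℂ) * Kf γ z ^ (m - j) * iteratedDeriv j g z)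
          + Jf γ z ^ (2 * m + v + 1) * ∑ j ∈ range (m + 1),
            ((ckN v m j : ℂ) * (((m - j : ℕ) : ℂ) * Kf γ z ^ (m - j - 1) * (-(Kf γ z) ^ 2)) * iteratedDeriv j g z
              + (ckN v m j : ℂ) * Kf γ z ^ (m - j) * iteratedDeriv (j + 1) g z)) * Jf γ z ^ 2 := by
      rw [huniq]
      field_simp
    rw [hmain, hc]
    calc ((2 * m + v + 1 : ℂ) * Jf γ z ^ (2 * m + v) * (Kf γ z * Jf γ z) *
            (∑ j ∈ range (m + 1), (ckN v m j : ℂ) * Kf γ z ^ (m - j) * iteratedDeriv j g z)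
          + Jf γ z ^ (2 * m + v + 1) * ∑ j ∈ range (m + 1),
            ((ckN v m j : ℂ) * (((m - j : ℕ) : ℂ) * Kf γ z ^ (m - j - 1) * (-(Kf γ z) ^ 2)) * iteratedDeriv j g z
              + (ckN v m j : ℂ) * Kf γ z ^ (m - j) * iteratedDeriv (j + 1) g z)) * Jf γ z ^ 2
        = Jf γ z ^ (2 * (m + 1) + v + 1) *
            ((2 * m + v + 1 : ℂ) * Kf γ z *
              (∑ j ∈ range (m + 1), (ckN v m j : ℂ) * Kf γ z ^ (m - j) * iteratedDeriv j g z)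
            + ∑ j ∈ range (m + 1),
              ((ckN v m j : ℂ) * (((m - j : ℕ) : ℂ) * Kf γ z ^ (m - j - 1) * (-(Kf γ z ^ 2))) * iteratedDeriv j g z
                + (ckN v m j : ℂ) * Kf γ z ^ (m - j) * iteratedDeriv (j + 1) g z)) := by
          ring
      _ = Jf γ z ^ (2 * (m + 1) + v + 1) *
            ∑ j ∈ range (m + 1 + 1), (ckN v (m + 1) j : ℂ) * Kf γ z ^ (m + 1 - j) * iteratedDeriv j g z := by
          rw [key_sum v m (Kf γ z) (fun j => iteratedDeriv j g z)]

/-- If g is a modular form of weight w ≥ 1 for Γ, its Cohen–Kuznetsov lifting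
g̃(z,X) = Σ_j g⁽ʲ⁾(z) X^j/(j!(j+w−1)!) satisfies the Jacobi-like form identity
g̃(γz, 𝔍^{−2}X) = 𝔍^w e^{𝔎X} g̃(z,X), understood coefficientwise in X: for
each m, 𝔍^{−2m} g⁽ᵐ⁾(γz)/(m!(m+w−1)!) =
𝔍^w Σ_{j=0}^{m} 𝔎^{m−j}/(m−j)! · g⁽ʲ⁾(z)/(j!(j+w−1)!). -/
theorem cohen_kuznetsov_jacobi_like (Γ : Subgroup SL2R) (w : ℕ) (hw : 1 ≤ w)
    (g : ℂ → ℂ) (hg : IsMF Γ (w : ℤ) g) :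
    ∀ γ ∈ Γ, ∀ z : ℂ, 0 < z.im → ∀ m : ℕ,
      Jf γ z ^ (-(2 * m : ℤ)) * (iteratedDeriv m g (actSL γ z) /
          ((m.factorial : ℂ) * ((m + w - 1).factorial : ℂ))) =
        Jf γ z ^ (w : ℤ) * ∑ j ∈ Finset.range (m + 1),
          Kf γ z ^ (m - j) / ((m - j).factorial : ℂ) *
            (iteratedDeriv j g z / ((j.factorial : ℂ) * ((j + w - 1).factorial : ℂ))) := by
  obtain ⟨v, rfl⟩ : ∃ v, w = v + 1 := ⟨w - 1, by omega⟩
  intro γ hγ z hz m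
  have hU : IsOpen {z : ℂ | 0 < z.im} := isOpen_lt continuous_const Complex.continuous_im
  have hol : ∀ n : ℕ, AnalyticOnNhd ℂ (iteratedDeriv n g) {z : ℂ | 0 < z.im} := by
    intro n
    induction n with
    | zero => simpa [iteratedDeriv_zero] using hg.1.analyticOnNhd hU
    | succ n ih => rw [iteratedDeriv_succ]; exact ih.deriv
  have hmod : ∀ z : ℂ, 0 < z.im → g (actSL γ z) = Jf γ z ^ (v + 1) * g z := by
    intro z hz
    have h := hg.2 γ hγ z hz
    rwa [zpow_natCast] at h
  have key := CK_aux v g γ hol hmod m z hz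
  have hJ := Jf_ne γ z hz
  simp only [show m + (v + 1) - 1 = m + v from by omega,
    show ∀ j : ℕ, j + (v + 1) - 1 = j + v from fun j => by omega]
  rw [key, show (-(2 * m : ℤ)) = -((2 * m : ℕ) : ℤ) from by push_cast; ring, _root_.zpow_neg,
    zpow_natCast, zpow_natCast, show 2 * m + v + 1 = 2 * m + (v + 1) from by omega, pow_add]
  have hfac : ∀ n : ℕ, ((n.factorial : ℂ)) ≠ 0 :=
    fun n => Nat.cast_ne_zero.2 (Nat.factorial_ne_zero n)
  have hstep : (Jf γ z ^ (2 * m))⁻¹ * (Jf γ z ^ (2 * m) * Jf γ z ^ (v + 1) *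
        (∑ j ∈ range (m + 1), (ckN v m j : ℂ) * Kf γ z ^ (m - j) * iteratedDeriv j g z) /
        ((m.factorial : ℂ) * ((m + v).factorial : ℂ)))
      = Jf γ z ^ (v + 1) *
        ((∑ j ∈ range (m + 1), (ckN v m j : ℂ) * Kf γ z ^ (m - j) * iteratedDeriv j g z) /
          ((m.factorial : ℂ) * ((m + v).factorial : ℂ))) := by
    have h2m : Jf γ z ^ (2 * m) ≠ 0 := pow_ne_zero _ hJ
    calc (Jf γ z ^ (2 * m))⁻¹ * (Jf γ z ^ (2 * m) * Jf γ z ^ (v + 1) *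
          (∑ j ∈ range (m + 1), (ckN v m j : ℂ) * Kf γ z ^ (m - j) * iteratedDeriv j g z) /
          ((m.factorial : ℂ) * ((m + v).factorial : ℂ)))
        = ((Jf γ z ^ (2 * m))⁻¹ * Jf γ z ^ (2 * m)) * (Jf γ z ^ (v + 1) *
            ((∑ j ∈ range (m + 1), (ckN v m j : ℂ) * Kf γ z ^ (m - j) * iteratedDeriv j g z) /
              ((m.factorial : ℂ) * ((m + v).factorial : ℂ)))) := by ring
      _ = _ := by rw [inv_mul_cancel₀ h2m, one_mul]
  rw [hstep]
  congr 1
  rw [Finset.sum_div]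
  refine Finset.sum_congr rfl fun j hj => ?_
  have hjm : j ≤ m := Nat.lt_succ_iff.mp (Finset.mem_range.mp hj)
  rw [ckN_castC v m j hjm]
  have h1 : (m.factorial : ℂ) ≠ 0 := hfac m
  have h2 : ((m + v).factorial : ℂ) ≠ 0 := hfac (m + v)
  have h3 : ((m - j).factorial : ℂ) ≠ 0 := hfac (m - j)
  have h4 : (j.factorial : ℂ) ≠ 0 := hfac j
  have h5 : ((j + v).factorial : ℂ) ≠ 0 := hfac (j + v)
  field_simp
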